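/- (Lossless expansion for LayerNorm.) Let D_S ≥ 1, D_T ≥ D_S, k = ⌊D_T/D_S⌋, r = D_T mod D_S, and η = √(k·D_S/D_T). Let μ, β ∈ ℝ^{D_S}, ε > 0, and let ζ ∈ ℝ^r be arbitrary. Define μ* ∈ ℝ^{D_T} by μ*[i] = η·μ[i mod D_S] for i < k·D_S and μ*[i] = η·ζ[i − k·D_S] otherwise; define β* = V_zero(β) and ε* = η²·ε. Then for every x ∈ ℝ^{D_S}, LN(V_avg(x); μ*, β*, ε*) = V_zero(LN(x; μ, β, ε)). -/

import Mathlib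

/-- Index bound for the tail part of an expansion from dimension `DS` to `DT`. -/
theorem sub_lt_mod (DS DT i : ℕ) (hDS : 0 < DS) (hi : i < DT) (h2 : DT / DS * DS ≤ i) :
    i - DT / DS * DS < DT % DS := by
  have h := Nat.div_add_mod' DT DS
  set m := DT / DS * DS
  omega

/-- Average expansion `V_avg` from `ℝ^{DS}` to `ℝ^{DT}`. -/
noncomputable def vAvg (DS DT : ℕ) (hDS : 0 < DS) (x : Fin DS → ℝ) : Fin DT → ℝ :=
  fun i => if i.val < DT / DS * DS then x ⟨i.val % DS, Nat.mod_lt _ hDS⟩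
           else (∑ j, x j) / (DS : ℝ)

/-- Zero expansion `V_zero` from `ℝ^{DS}` to `ℝ^{DT}`. -/
def vZero (DS DT : ℕ) (hDS : 0 < DS) (x : Fin DS → ℝ) : Fin DT → ℝ :=
  fun i => if i.val < DT / DS * DS then x ⟨i.val % DS, Nat.mod_lt _ hDS⟩ else 0

/-- Circular expansion `V_circ` from `ℝ^{DS}` to `ℝ^{DT}`. -/
def vCirc (DS DT : ℕ) (hDS : 0 < DS) (x : Fin DS → ℝ) : Fin DT → ℝ :=
  fun i => x ⟨i.val % DS, Nat.mod_lt _ hDS⟩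

/-- Mean of a vector. -/
noncomputable def meanV {D : ℕ} (x : Fin D → ℝ) : ℝ := (∑ i, x i) / (D : ℝ)

/-- Population variance of a vector. -/
noncomputable def varV {D : ℕ} (x : Fin D → ℝ) : ℝ := (∑ i, (x i - meanV x) ^ 2) / (D : ℝ)

/-- LayerNorm with scale `μ`, bias `β` and constant `ε`. -/
noncomputable def layerNorm {D : ℕ} (x μ β : Fin D → ℝ) (ε : ℝ) : Fin D → ℝ :=
  fun i => μ i * (x i - meanV x) / Real.sqrt (varV x + ε) + β i

/-- `η = √(⌊D_T/D_S⌋·D_S/D_T)`. -/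
noncomputable def eta (DS DT : ℕ) : ℝ :=
  Real.sqrt (((DT / DS * DS : ℕ) : ℝ) / (DT : ℝ))

/-- The expanded scale `μ*`: `μ*[i] = η·μ[i mod D_S]` for `i < ⌊D_T/D_S⌋·D_S`,
and `μ*[i] = η·ζ[i − ⌊D_T/D_S⌋·D_S]` otherwise. -/
noncomputable def muStar (DS DT : ℕ) (hDS : 0 < DS) (η : ℝ) (μ : Fin DS → ℝ)
    (ζ : Fin (DT % DS) → ℝ) : Fin DT → ℝ :=
  fun i => if h : i.val < DT / DS * DS
    then η * μ ⟨i.val % DS, Nat.mod_lt _ hDS⟩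
    else η * ζ ⟨i.val - DT / DS * DS, sub_lt_mod DS DT i.val hDS i.isLt (not_lt.mp h)⟩


lemma sum_range_mul_mod (n k : ℕ) (g : ℕ → ℝ)
    (hg : ∀ i, g (i % n) = g i) :
    ∑ i ∈ Finset.range (k * n), g i = (k : ℝ) * ∑ i ∈ Finset.range n, g i := by
  induction k with
  | zero => simp
  | succ k ih =>
    rw [Nat.succ_mul, Finset.range_eq_Ico,
      ← Finset.sum_Ico_consecutive _ (Nat.zero_le (k * n)) (Nat.le_add_right _ _),
      ← Finset.range_eq_Ico, ih, Finset.sum_Ico_eq_sum_range]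
    have h1 : k * n + n - k * n = n := by omega
    rw [h1]
    have hcong : ∀ i ∈ Finset.range n, g (k * n + i) = g i := by
      intro i hi
      rw [← hg (k * n + i), Nat.add_comm, Nat.add_mul_mod_self_right, hg i]
    rw [Finset.sum_congr rfl hcong]
    push_cast
    ring

lemma varV_nonneg {D : ℕ} (x : Fin D → ℝ) : 0 ≤ varV x :=
  div_nonneg (Finset.sum_nonneg fun i _ => sq_nonneg _) (Nat.cast_nonneg D)

/-- lossless expansion for LayerNorm:
`LN(V_avg(x); μ*, V_zero(β), η²·ε) = V_zero(LN(x; μ, β, ε))`. -/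
theorem stmt_3 (DS DT : ℕ) (hDS : 0 < DS) (hDT : DS ≤ DT)
    (μ β : Fin DS → ℝ) (ε : ℝ) (hε : 0 < ε)
    (ζ : Fin (DT % DS) → ℝ) (x : Fin DS → ℝ) :
    layerNorm (vAvg DS DT hDS x) (muStar DS DT hDS (eta DS DT) μ ζ)
        (vZero DS DT hDS β) ((eta DS DT) ^ 2 * ε)
      = vZero DS DT hDS (layerNorm x μ β ε) := by
  have hDT0 : 0 < DT := lt_of_lt_of_le hDS hDT
  have hk1 : 1 ≤ DT / DS := (Nat.one_le_div_iff hDS).mpr hDT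
  have hmDS : DS ≤ DT / DS * DS := by
    calc DS = 1 * DS := (one_mul DS).symm
    _ ≤ DT / DS * DS := Nat.mul_le_mul_right DS hk1
  have hm0 : 0 < DT / DS * DS := lt_of_lt_of_le hDS hmDS
  have hmDT : DT / DS * DS ≤ DT := Nat.div_mul_le_self DT DS
  set m := DT / DS * DS with hm
  set S := ∑ j, x j with hSdef
  set g : ℕ → ℝ := fun n => x ⟨n % DS, Nat.mod_lt _ hDS⟩ with hgdef
  have hgper : ∀ i, g (i % DS) = g i := by
    intro i
    simp only [hgdef, Nat.mod_mod_of_dvd _ (dvd_refl DS)]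
  have hgsum : ∑ i ∈ Finset.range DS, g i = S := by
    rw [hSdef, ← Fin.sum_univ_eq_sum_range g DS]
    apply Finset.sum_congr rfl
    intro i _
    simp only [hgdef]
    congr 1
    exact Fin.ext (Nat.mod_eq_of_lt i.isLt)
  have hDSr : (0:ℝ) < (DS:ℝ) := by exact_mod_cast hDS
  have hDTr : (0:ℝ) < (DT:ℝ) := by exact_mod_cast hDT0
  have hmr : ((m:ℕ):ℝ) = ((DT/DS : ℕ):ℝ) * (DS:ℝ) := by rw [hm]; push_cast; ring
  -- mean of x
  have hmx : meanV x = S / (DS:ℝ) := rfl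
  -- general splitting lemma for sums over the expanded index set
  have hsplit : ∀ F : ℕ → ℝ,
      ∑ i ∈ Finset.range DT, F i
        = ∑ i ∈ Finset.range m, F i + ∑ i ∈ Finset.Ico m DT, F i := by
    intro F
    rw [Finset.range_eq_Ico, ← Finset.sum_Ico_consecutive _ (Nat.zero_le m) hmDT,
      ← Finset.range_eq_Ico]
  -- sum of vAvg
  have hvAvg_eq : ∀ i : Fin DT,
      vAvg DS DT hDS x i = (fun n => if n < m then g n else S / (DS:ℝ)) i.val :=
    fun i => rfl
  have hsum : ∑ i, vAvg DS DT hDS x i = (DT:ℝ) * (S / (DS:ℝ)) := by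
    rw [Finset.sum_congr rfl (fun i _ => hvAvg_eq i),
      Fin.sum_univ_eq_sum_range (fun n => if n < m then g n else S / (DS:ℝ)) DT,
      hsplit]
    have h1 : ∑ i ∈ Finset.range m, (if i < m then g i else S / (DS:ℝ)) = ((DT/DS : ℕ):ℝ) * S := by
      rw [Finset.sum_congr rfl (fun i hi => if_pos (Finset.mem_range.mp hi)), hm,
        sum_range_mul_mod DS (DT/DS) g hgper, hgsum]
    have h2 : ∑ i ∈ Finset.Ico m DT, (if i < m then g i else S / (DS:ℝ))
        = ((DT - m : ℕ):ℝ) * (S / (DS:ℝ)) := by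
      rw [Finset.sum_congr rfl (fun i hi => if_neg (by
        have := (Finset.mem_Ico.mp hi).1; omega)), Finset.sum_const, Nat.card_Ico]
      simp [nsmul_eq_mul]
    rw [h1, h2]
    have hcast : ((DT - m : ℕ):ℝ) = (DT:ℝ) - ((m:ℕ):ℝ) := by
      push_cast [hmDT]; ring
    rw [hcast, hmr]
    field_simp
    ring
  have hmean : meanV (vAvg DS DT hDS x) = meanV x := by
    unfold meanV
    rw [hsum, mul_comm, mul_div_assoc, div_self (ne_of_gt hDTr), mul_one]
  -- variance
  have hvarsumx : ∑ j, (x j - meanV x) ^ 2 = (DS:ℝ) * varV x := by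
    rw [show varV x = (∑ j, (x j - meanV x) ^ 2) / (DS:ℝ) from rfl]
    field_simp
  have hvarsum : ∑ i, (vAvg DS DT hDS x i - meanV (vAvg DS DT hDS x)) ^ 2
      = ((m:ℕ):ℝ) * varV x := by
    rw [hmean]
    have heq : ∀ i : Fin DT,
        (vAvg DS DT hDS x i - meanV x) ^ 2
          = (fun n => (if n < m then (g n - meanV x)^2 else 0)) i.val := by
      intro i
      rw [hvAvg_eq i]
      by_cases h : i.val < m
      · simp [h]
      · simp [h, hmx]
    rw [Finset.sum_congr rfl (fun i _ => heq i),
      Fin.sum_univ_eq_sum_range (fun n => (if n < m then (g n - meanV x)^2 else 0)) DT,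
      hsplit]
    have h1 : ∑ i ∈ Finset.range m, (if i < m then (g i - meanV x)^2 else 0)
        = ((DT/DS : ℕ):ℝ) * ((DS:ℝ) * varV x) := by
      rw [Finset.sum_congr rfl (fun i hi => if_pos (Finset.mem_range.mp hi)), hm,
        sum_range_mul_mod DS (DT/DS) (fun n => (g n - meanV x)^2)
          (fun i => by simp only [hgper]), ← hvarsumx]
      congr 1
      rw [← Fin.sum_univ_eq_sum_range (fun n => (g n - meanV x)^2) DS]
      apply Finset.sum_congr rfl
      intro i _
      simp only [hgdef]
      have hfi : (⟨i.val % DS, Nat.mod_lt _ hDS⟩ : Fin DS) = i :=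
        Fin.ext (Nat.mod_eq_of_lt i.isLt)
      rw [hfi]
    have h2 : ∑ i ∈ Finset.Ico m DT, (if i < m then (g i - meanV x)^2 else 0) = 0 := by
      apply Finset.sum_eq_zero
      intro i hi
      exact if_neg (by have := (Finset.mem_Ico.mp hi).1; omega)
    rw [h1, h2, hmr]
    ring
  have hvar : varV (vAvg DS DT hDS x) = ((m:ℕ):ℝ) / (DT:ℝ) * varV x := by
    rw [show varV (vAvg DS DT hDS x)
        = (∑ i, (vAvg DS DT hDS x i - meanV (vAvg DS DT hDS x)) ^ 2) / (DT:ℝ) from rfl,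
      hvarsum]
    ring
  have hmDT_nonneg : 0 ≤ ((m:ℕ):ℝ) / (DT:ℝ) := by positivity
  have heta2 : (eta DS DT) ^ 2 = ((m:ℕ):ℝ) / (DT:ℝ) := Real.sq_sqrt hmDT_nonneg
  have heta_pos : 0 < eta DS DT := by
    apply Real.sqrt_pos.mpr
    apply div_pos _ hDTr
    exact_mod_cast hm0
  have hs_pos : 0 < Real.sqrt (varV x + ε) :=
    Real.sqrt_pos.mpr (by have := varV_nonneg x; linarith)
  have hdenom : Real.sqrt (varV (vAvg DS DT hDS x) + (eta DS DT) ^ 2 * ε)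
      = eta DS DT * Real.sqrt (varV x + ε) := by
    rw [hvar, heta2, ← mul_add,
      Real.sqrt_mul hmDT_nonneg]
    rfl
  funext i
  unfold layerNorm
  rw [hmean, hdenom]
  by_cases h : i.val < m
  · have hva : vAvg DS DT hDS x i = g i.val := if_pos h
    simp only [vZero, muStar, ← hm, hva, h, if_pos, dif_pos]
    have : eta DS DT * μ ⟨i.val % DS, Nat.mod_lt _ hDS⟩ * (g i.val - meanV x)
        = eta DS DT * (μ ⟨i.val % DS, Nat.mod_lt _ hDS⟩ * (g i.val - meanV x)) := by ring
    rw [this, mul_div_mul_left _ _ (ne_of_gt heta_pos)]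
  · have hva : vAvg DS DT hDS x i = S / (DS:ℝ) := if_neg h
    simp only [vZero, muStar, ← hm, hva, h, if_neg, dif_neg, not_false_iff, hmx, sub_self,
      mul_zero, zero_div, add_zero, if_false]
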